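/- arXiv:1703.09005 — 2 statements merged into one kernel-verified Lean document; each statement's English description precedes it below -/
import Mathlib

section
/- If V : ℝⁿ → ℝ is a value function satisfying the dynamic programming principle and there exist C¹ functions V_n with ‖V − V_n‖_∞ → 0 and λV_n(x) − ∇V_n(x)·f(x,u) ≤ g(x,u) + ε_n on ℝⁿ×U with ε_n → 0, then any nonnegative measure μ with B*μ = δ_{x₀} (i.e., ∫(λφ − ∇φ·f) dμ = φ(x₀) for all φ ∈ C¹) satisfies V(x₀) ≤ ∫ g dμ. Hence P(x₀) := inf{⟨μ,g⟩ : B*μ = δ_{x₀}, μ ≥ 0} ≥ V(x₀). -/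
open MeasureTheory Real Set

/-- If `V` admits approximate smooth subsolutions `V_k` (uniformly
convergent to `V`, with `λV_k − ∇V_k·f ≤ g + ε_k` and `ε_k → 0`), then every
nonnegative measure `μ` with `B*μ = δ_{x₀}` satisfies `V(x₀) ≤ ∫ g dμ`. -/
theorem stmt_15 {n m : ℕ} (lam : ℝ) (hlam : 0 < lam)
    (U : Set (Fin m → ℝ)) (hU : IsCompact U)
    (f : (Fin n → ℝ) × (Fin m → ℝ) → (Fin n → ℝ)) (hfc : Continuous f)
    (g : (Fin n → ℝ) × (Fin m → ℝ) → ℝ) (hgc : Continuous g) (hgb : ∃ C, ∀ p, |g p| ≤ C)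
    (x₀ : Fin n → ℝ)
    (V : (Fin n → ℝ) → ℝ)
    (Vn : ℕ → (Fin n → ℝ) → ℝ) (ε : ℕ → ℝ)
    (hVnC1 : ∀ k, ContDiff ℝ 1 (Vn k))
    (hVnb : ∀ k, ∃ C, ∀ z, |Vn k z| + ‖fderiv ℝ (Vn k) z‖ ≤ C)
    (hconv : ∀ δ > (0:ℝ), ∃ N, ∀ k ≥ N, ∀ z, |V z - Vn k z| ≤ δ)
    (hε : Filter.Tendsto ε Filter.atTop (nhds 0))
    (hsub : ∀ k, ∀ z : Fin n → ℝ, ∀ v ∈ U,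
      lam * Vn k z - fderiv ℝ (Vn k) z (f (z, v)) ≤ g (z, v) + ε k)
    (μ : Measure ((Fin n → ℝ) × (Fin m → ℝ))) [IsFiniteMeasure μ]
    (hμU : μ {p : (Fin n → ℝ) × (Fin m → ℝ) | p.2 ∉ U} = 0)
    (hB : ∀ φ : (Fin n → ℝ) → ℝ, ContDiff ℝ 1 φ →
      (∃ C, ∀ z, |φ z| + ‖fderiv ℝ φ z‖ ≤ C) →
      ∫ p, (lam * φ p.1 - fderiv ℝ φ p.1 (f p)) ∂μ = φ x₀) :
    V x₀ ≤ ∫ p, g p ∂μ := by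
  obtain ⟨C, hC⟩ := hgb
  set M : ℝ := (μ Set.univ).toReal with hM
  have hM0 : 0 ≤ M := ENNReal.toReal_nonneg
  have hgint : Integrable g μ := by
    refine ⟨hgc.aestronglyMeasurable, ?_⟩
    exact HasFiniteIntegral.of_bounded (C := C)
      (Filter.Eventually.of_forall fun p => by simpa [Real.norm_eq_abs] using hC p)
  have key : ∀ k, Vn k x₀ ≤ (∫ p, g p ∂μ) + ε k * M := by
    intro k
    set h : ((Fin n → ℝ) × (Fin m → ℝ)) → ℝ :=
      fun p => lam * Vn k p.1 - fderiv ℝ (Vn k) p.1 (f p) with hh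
    have hB1 : ∫ p, h p ∂μ = Vn k x₀ := hB (Vn k) (hVnC1 k) (hVnb k)
    have hB2 : ∫ p, (h p + lam) ∂μ = Vn k x₀ + 1 := by
      obtain ⟨C', hC'⟩ := hVnb k
      have hd : ∀ z, fderiv ℝ (fun z => Vn k z + 1) z = fderiv ℝ (Vn k) z := by
        intro z; exact fderiv_add_const 1
      have := hB (fun z => Vn k z + 1) ((hVnC1 k).add contDiff_const) ?_
      · simp only [hd] at this
        rw [← this]
        refine integral_congr_ae (Filter.Eventually.of_forall fun p => ?_)
        simp only [hh]
        ring
      · refine ⟨C' + 1, fun z => ?_⟩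
        rw [hd]
        have := hC' z
        have := abs_add_le (Vn k z) 1
        simp only [abs_one] at this
        linarith
    have hint : Integrable h μ := by
      by_contra hni
      have hni2 : ¬ Integrable (fun p => h p + lam) μ := by
        intro hI
        have := hI.add (integrable_const (-lam))
        refine hni (this.congr (Filter.Eventually.of_forall fun p => ?_))
        simp
      rw [integral_undef hni] at hB1
      rw [integral_undef hni2] at hB2
      linarith
    have hae : ∀ᵐ p ∂μ, h p ≤ g p + ε k := by
      rw [ae_iff]
      refine measure_mono_null (fun p hp => ?_) hμU
      simp only [Set.mem_setOf_eq, not_le] at hp ⊢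
      intro hpU
      have := hsub k p.1 p.2 hpU
      simp only [hh] at hp
      simp only [Prod.mk.eta] at this
      linarith
    have hmono : ∫ p, h p ∂μ ≤ ∫ p, (g p + ε k) ∂μ :=
      integral_mono_ae hint (hgint.add (integrable_const _)) hae
    have heq : ∫ p, (g p + ε k) ∂μ = (∫ p, g p ∂μ) + ε k * M := by
      rw [integral_add hgint (integrable_const _), integral_const, smul_eq_mul]
      change ∫ a, g a ∂μ + M * ε k = _
      ring
    rw [hB1, heq] at hmono
    exact hmono
  refine le_of_forall_pos_le_add ?_
  intro η hη
  obtain ⟨N1, hN1⟩ := hconv (η / 2) (by linarith)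
  have hpos : 0 < η / (2 * (M + 1)) := by positivity
  obtain ⟨N2, hN2⟩ := Metric.tendsto_atTop.mp hε (η / (2 * (M + 1))) hpos
  set k := max N1 N2
  have h1 : |V x₀ - Vn k x₀| ≤ η / 2 := hN1 k (le_max_left _ _) x₀
  have h2 : |ε k| < η / (2 * (M + 1)) := by
    have := hN2 k (le_max_right _ _)
    simpa [Real.dist_eq] using this
  have h3 : ε k * M ≤ η / 2 := by
    have hb : ε k * M ≤ |ε k| * M := mul_le_mul_of_nonneg_right (le_abs_self _) hM0
    have hc : |ε k| * M ≤ η / (2 * (M + 1)) * M :=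
      mul_le_mul_of_nonneg_right h2.le hM0
    have hd : η / (2 * (M + 1)) * M ≤ η / 2 := by
      rw [div_mul_eq_mul_div, div_le_div_iff₀ (by linarith) (by norm_num)]
      nlinarith
    linarith
  have h4 := key k
  have h5 := abs_le.mp h1
  linarith
end

section
/- For the relaxed control system ẋ(t) = ∫_U f(x(t),u) dm_t(u) with a Young measure (relaxed control) m : [0,∞) → P(U), the relaxed occupation measure N^m defined by ⟨N^m, l⟩ = ∫₀^∞ e^{-λt} ∫_U l(x(t),u) dm_t(u) dt, for a trajectory remaining in compact X, satisfies ⟨N^m, Aφ⟩ = φ(x₀) for all φ ∈ C¹(X), i.e., A* N^m = δ_{x₀}. -/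
open MeasureTheory Real Set

open Metric Filter intervalIntegral in
lemma key_lemma {n : ℕ} (lam C : ℝ) (hC : 0 ≤ C)
    (F : ℝ → (Fin n → ℝ)) (hFmeas : Measurable F) (hFb : ∀ τ, ‖F τ‖ ≤ C)
    (x : ℝ → Fin n → ℝ) (hxc : Continuous x)
    (hsol : ∀ t ≥ (0:ℝ), x t = x 0 + ∫ τ in (0:ℝ)..t, F τ)
    (X : Set (Fin n → ℝ)) (hX : IsCompact X) (hxX : ∀ t ≥ (0:ℝ), x t ∈ X)
    (s : Set (Fin n → ℝ)) (hs : IsOpen s) (hXs : X ⊆ s)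
    (φ : (Fin n → ℝ) → ℝ) (hφ : ContDiffOn ℝ 1 φ s)
    (T : ℝ) (hT : 0 < T) :
    ∫ t in Set.Ioc (0:ℝ) T, Real.exp (-lam * t) *
        ((fderiv ℝ φ (x t)) (F t) - lam * φ (x t))
      = Real.exp (-lam * T) * φ (x T) - φ (x 0) := by
  -- basic integrability of F
  have hFint : ∀ a b : ℝ, IntervalIntegrable F volume a b := by
    intro a b
    rw [intervalIntegrable_iff]
    refine (integrableOn_const ?_).mono' hFmeas.aestronglyMeasurable.restrict
      (ae_of_all _ hFb)
    rw [Set.uIoc]; exact measure_Ioc_lt_top.ne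
  have hFloc : LocallyIntegrable F volume := by
    intro t
    refine ⟨closedBall t 1, closedBall_mem_nhds t one_pos, ?_⟩
    refine (integrableOn_const ?_).mono' hFmeas.aestronglyMeasurable.restrict
      (ae_of_all _ hFb)
    rw [Real.volume_closedBall]; exact ENNReal.ofReal_ne_top
  -- increments of x
  have hinc : ∀ t ≥ (0:ℝ), ∀ h > (0:ℝ), x (t + h) - x t = ∫ τ in t..(t + h), F τ := by
    intro t ht h hh
    rw [hsol (t + h) (by linarith), hsol t ht,
      ← integral_interval_sub_left (hFint 0 (t + h)) (hFint 0 t)]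
    abel
  have hxlip : ∀ t ≥ (0:ℝ), ∀ h ≥ (0:ℝ), ‖x (t + h) - x t‖ ≤ C * h := by
    intro t ht h hh
    rcases eq_or_lt_of_le hh with rfl | hh'
    · simp
    · rw [hinc t ht h hh']
      have := intervalIntegral.norm_integral_le_of_norm_le_const
        (f := F) (a := t) (b := t + h) (C := C) (fun τ _ => hFb τ)
      calc ‖∫ τ in t..(t+h), F τ‖ ≤ C * |t + h - t| := this
        _ = C * h := by rw [show t + h - t = h by ring, abs_of_pos hh']
  -- compact thickening of X inside s
  obtain ⟨δ, δpos, hδ⟩ := hX.exists_thickening_subset_open hs hXs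
  set K : Set (Fin n → ℝ) := cthickening (δ / 2) X with hK
  have hKcomp : IsCompact K := hX.cthickening
  have hKs : K ⊆ s := (cthickening_subset_thickening' δpos (half_lt_self δpos) X).trans hδ
  have hXK : X ⊆ K := self_subset_cthickening X
  have hmemK : ∀ (y : Fin n → ℝ) (t : ℝ), 0 ≤ t → ‖y - x t‖ ≤ δ / 2 → y ∈ K := by
    intro y t ht hd
    refine mem_cthickening_of_dist_le y (x t) (δ / 2) X (hxX t ht) ?_
    rw [dist_eq_norm]; exact hd
  -- differentiability facts for φ
  have hφdiff : ∀ y ∈ s, HasFDerivAt φ (fderiv ℝ φ y) y := fun y hy =>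
    ((hφ.contDiffAt (hs.mem_nhds hy)).differentiableAt one_ne_zero).hasFDerivAt
  have hDφcont : ContinuousOn (fderiv ℝ φ) s :=
    hφ.continuousOn_fderiv_of_isOpen hs le_rfl
  obtain ⟨M₀, hM₀⟩ := hKcomp.exists_bound_of_continuousOn (hφ.continuousOn.mono hKs)
  obtain ⟨M₁, hM₁⟩ := hKcomp.exists_bound_of_continuousOn (hDφcont.mono hKs)
  have hM₀0 : 0 ≤ M₀ := le_trans (norm_nonneg _) (hM₀ _ (hXK (hxX 0 le_rfl)))
  have hM₁0 : 0 ≤ M₁ := le_trans (norm_nonneg _) (hM₁ _ (hXK (hxX 0 le_rfl)))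
  -- the smoothing scale
  set h₀ : ℝ := δ / (4 * C + 4) with hh₀
  have h₀pos : 0 < h₀ := by positivity
  have hsmall : ∀ h : ℝ, 0 < h → h ≤ h₀ → 2 * C * h ≤ δ / 2 := by
    intro h h1 h2
    have h3 : 2 * C * h ≤ 2 * C * h₀ := by nlinarith
    refine h3.trans ?_
    rw [hh₀]
    have h4 : (0:ℝ) < 4 * C + 4 := by positivity
    rw [show 2 * C * (δ / (4 * C + 4)) = (2 * C * δ) / (4 * C + 4) by ring,
      div_le_div_iff₀ h4 two_pos]
    nlinarith [mul_nonneg hC δpos.le]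
  -- the primitive of x and the smoothed trajectory
  set P : ℝ → Fin n → ℝ := fun t => ∫ σ in (0:ℝ)..t, x σ with hP
  have hPderiv : ∀ t : ℝ, HasDerivAt P (x t) t := fun t =>
    intervalIntegral.integral_hasDerivAt_right (hxc.intervalIntegrable _ _)
      (hxc.stronglyMeasurableAtFilter _ _) hxc.continuousAt
  set xa : ℝ → ℝ → Fin n → ℝ := fun h t => x 0 + h⁻¹ • (P (t + h) - P t - P h) with hxa
  set D : ℝ → ℝ → Fin n → ℝ := fun h t => h⁻¹ • (x (t + h) - x t) with hD
  have hDcont : ∀ h, Continuous (D h) := by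
    intro h
    exact ((hxc.comp (continuous_id.add continuous_const)).sub hxc).const_smul (h⁻¹ : ℝ)
  have hPadd : ∀ (h t : ℝ), HasDerivAt (fun t => P (t + h)) (x (t + h)) t := by
    intro h t
    have h1 : HasDerivAt (fun t : ℝ => t + h) 1 t := (hasDerivAt_id t).add_const h
    have := (hPderiv (t + h)).scomp t h1
    rw [one_smul] at this; exact this
  have hxaderiv : ∀ (h : ℝ), ∀ t, HasDerivAt (xa h) (D h t) t := by
    intro h t
    exact ((((hPadd h t).sub (hPderiv t)).sub_const (P h)).const_smul h⁻¹).const_add (x 0)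
  have hxacont : ∀ h : ℝ, Continuous (xa h) := fun h =>
    continuous_iff_continuousAt.2 fun t => (hxaderiv h t).continuousAt
  have hxa0 : ∀ h : ℝ, xa h 0 = x 0 := by
    intro h; simp [hxa, hP]
  -- closeness of the smoothed trajectory
  have hxaclose : ∀ h : ℝ, 0 < h → ∀ t ≥ (0:ℝ), ‖xa h t - x t‖ ≤ 2 * C * h := by
    intro h hh t ht
    have e1 : xa h t - x t
        = h⁻¹ • (∫ σ in t..(t + h), (x σ - x t)) - h⁻¹ • (∫ σ in (0:ℝ)..h, (x σ - x 0)) := by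
      rw [intervalIntegral.integral_sub (hxc.intervalIntegrable _ _)
        intervalIntegrable_const, intervalIntegral.integral_sub
        (hxc.intervalIntegrable _ _) intervalIntegrable_const,
        intervalIntegral.integral_const, intervalIntegral.integral_const]
      have hPt : (∫ σ in t..(t+h), x σ) = P (t + h) - P t := by
        rw [hP]
        rw [← integral_interval_sub_left (hxc.intervalIntegrable 0 (t+h))
          (hxc.intervalIntegrable 0 t)]
      rw [hPt, hP]
      simp only [hxa]
      match_scalars <;> field_simp <;> ring
    rw [e1]
    have b1 : ‖∫ σ in t..(t + h), (x σ - x t)‖ ≤ C * h * |t + h - t| := by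
      apply intervalIntegral.norm_integral_le_of_norm_le_const
      intro σ hσ
      rw [Set.uIoc_of_le (by linarith)] at hσ
      have h1 : σ - t ≥ 0 := by linarith [hσ.1]
      have h2 := hxlip t ht (σ - t) h1
      rw [show t + (σ - t) = σ by ring] at h2
      refine h2.trans ?_
      have : σ - t ≤ h := by linarith [hσ.2]
      nlinarith
    have b2 : ‖∫ σ in (0:ℝ)..h, (x σ - x 0)‖ ≤ C * h * |h - 0| := by
      apply intervalIntegral.norm_integral_le_of_norm_le_const
      intro σ hσ
      rw [Set.uIoc_of_le (by linarith)] at hσ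
      have h2 := hxlip 0 le_rfl σ (le_of_lt hσ.1)
      rw [zero_add] at h2
      refine h2.trans ?_
      nlinarith [hσ.2]
    have hh' : |t + h - t| = h := by rw [show t + h - t = h by ring, abs_of_pos hh]
    have hh'' : |h - 0| = h := by rw [sub_zero, abs_of_pos hh]
    rw [hh'] at b1; rw [hh''] at b2
    calc ‖h⁻¹ • (∫ σ in t..(t + h), (x σ - x t)) - h⁻¹ • (∫ σ in (0:ℝ)..h, (x σ - x 0))‖
        ≤ ‖h⁻¹ • (∫ σ in t..(t + h), (x σ - x t))‖ + ‖h⁻¹ • (∫ σ in (0:ℝ)..h, (x σ - x 0))‖ :=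
          norm_sub_le _ _
      _ ≤ h⁻¹ * (C * h * h) + h⁻¹ * (C * h * h) := by
          gcongr
          · rw [norm_smul, Real.norm_eq_abs, abs_of_pos (by positivity)]
            gcongr
          · rw [norm_smul, Real.norm_eq_abs, abs_of_pos (by positivity)]
            gcongr
      _ = 2 * C * h := by field_simp; ring
  have hxamem : ∀ h : ℝ, 0 < h → h ≤ h₀ → ∀ t ≥ (0:ℝ), xa h t ∈ K := by
    intro h h1 h2 t ht
    exact hmemK _ t ht ((hxaclose h h1 t ht).trans (hsmall h h1 h2))
  -- bound for D
  have hDbound : ∀ h : ℝ, 0 < h → ∀ t ≥ (0:ℝ), ‖D h t‖ ≤ C := by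
    intro h hh t ht
    rw [hD]
    simp only
    rw [norm_smul, Real.norm_eq_abs, abs_of_pos (by positivity)]
    have h2 := hxlip t ht h hh.le
    calc h⁻¹ * ‖x (t + h) - x t‖ ≤ h⁻¹ * (C * h) := by gcongr
      _ = C := by field_simp
  -- continuity of the smoothed integrand
  have hcontD : ∀ h : ℝ, 0 < h → h ≤ h₀ → ContinuousOn (fun t => Real.exp (-lam * t) *
      ((fderiv ℝ φ (xa h t)) (D h t) - lam * φ (xa h t))) (Set.Icc 0 T) := by
    intro h h1 h2
    have hmaps : Set.MapsTo (xa h) (Set.Icc 0 T) s := fun t ht =>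
      hKs (hxamem h h1 h2 t ht.1)
    refine ContinuousOn.mul ?_ (ContinuousOn.sub ?_ ?_)
    · exact (Real.continuous_exp.comp (continuous_const.mul continuous_id)).continuousOn
    · exact (hDφcont.comp (hxacont h).continuousOn hmaps).clm_apply (hDcont h).continuousOn
    · exact continuousOn_const.mul (hφ.continuousOn.comp (hxacont h).continuousOn hmaps)
  -- the identity for smoothed trajectories
  have hid : ∀ h : ℝ, 0 < h → h ≤ h₀ →
      ∫ t in Set.Ioc (0:ℝ) T, Real.exp (-lam * t) *
          ((fderiv ℝ φ (xa h t)) (D h t) - lam * φ (xa h t))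
        = Real.exp (-lam * T) * φ (xa h T) - φ (x 0) := by
    intro h h1 h2
    have hmem : ∀ t ∈ Set.uIcc (0:ℝ) T, xa h t ∈ s := by
      intro t htm
      rw [Set.uIcc_of_le hT.le] at htm
      exact hKs (hxamem h h1 h2 t htm.1)
    have hderiv : ∀ t ∈ Set.uIcc (0:ℝ) T,
        HasDerivAt (fun t => Real.exp (-lam * t) * φ (xa h t))
          (Real.exp (-lam * t) * ((fderiv ℝ φ (xa h t)) (D h t) - lam * φ (xa h t))) t := by
      intro t htm
      have h1' : HasDerivAt (fun t : ℝ => -lam * t) (-lam) t := by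
        simpa using (hasDerivAt_id t).const_mul (-lam)
      have hexp : HasDerivAt (fun t : ℝ => Real.exp (-lam * t))
          (Real.exp (-lam * t) * (-lam)) t := h1'.exp
      have hcomp : HasDerivAt (fun t => φ (xa h t)) ((fderiv ℝ φ (xa h t)) (D h t)) t :=
        (hφdiff _ (hmem t htm)).comp_hasDerivAt t (hxaderiv h t)
      have := hexp.mul hcomp
      exact this.congr_deriv (by ring)
    have := intervalIntegral.integral_eq_sub_of_hasDerivAt hderiv
      (((hcontD h h1 h2).mono (by rw [Set.uIcc_of_le hT.le])).intervalIntegrable)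
    rw [intervalIntegral.integral_of_le hT.le] at this
    rw [this, hxa0]
    norm_num

  set l : Filter ℝ := nhdsWithin 0 (Set.Ioi 0) with hl
  have hDint : ∀ h > (0:ℝ), ∀ t ≥ (0:ℝ), D h t = h⁻¹ • ∫ τ in t..(t + h), F τ := by
    intro h hh t ht
    rw [hD]
    simp only
    rw [hinc t ht h hh]
  have hDlim : ∀ᵐ τ, (0:ℝ) ≤ τ → Tendsto (fun h => D h τ) l (nhds (F τ)) := by
    filter_upwards [IsUnifLocDoublingMeasure.ae_tendsto_average_norm_sub (μ := volume) hFloc 1]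
      with τ hτ hτ0
    have havg : Tendsto (fun h : ℝ => ⨍ y in closedBall τ h, ‖F y - F τ‖) l (nhds 0) := by
      refine hτ (fun _ => τ) (fun h => h) tendsto_id ?_
      filter_upwards [self_mem_nhdsWithin] with h hh
      exact mem_closedBall_self (by rw [one_mul]; exact le_of_lt hh)
    rw [tendsto_iff_norm_sub_tendsto_zero]
    refine squeeze_zero' (g := fun h => 2 * ⨍ y in closedBall τ h, ‖F y - F τ‖)
      (Eventually.of_forall fun h => norm_nonneg _) ?_ ?_
    · filter_upwards [self_mem_nhdsWithin] with h hh
      have hh : (0:ℝ) < h := hh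
      have hInt : IntegrableOn (fun σ => ‖F σ - F τ‖) (closedBall τ h) := by
        refine ((hFloc.integrableOn_isCompact (isCompact_closedBall τ h)).sub
          ((integrableOn_const ?_))).norm
        rw [Real.volume_closedBall]; exact ENNReal.ofReal_ne_top
      have e : D h τ - F τ = h⁻¹ • ∫ σ in τ..(τ + h), (F σ - F τ) := by
        rw [intervalIntegral.integral_sub (hFint _ _) intervalIntegrable_const,
          intervalIntegral.integral_const, hDint h hh τ hτ0]
        match_scalars <;> field_simp <;> ring
      rw [e]
      have step1 : ‖∫ σ in τ..(τ + h), (F σ - F τ)‖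
          ≤ ∫ σ in Set.Ioc τ (τ + h), ‖F σ - F τ‖ := by
        rw [← intervalIntegral.integral_of_le (by linarith : τ ≤ τ + h)]
        exact intervalIntegral.norm_integral_le_integral_norm (by linarith)
      have step2 : ∫ σ in Set.Ioc τ (τ + h), ‖F σ - F τ‖
          ≤ ∫ σ in closedBall τ h, ‖F σ - F τ‖ := by
        refine setIntegral_mono_set hInt (Eventually.of_forall fun y => norm_nonneg _)
          (HasSubset.Subset.eventuallyLE ?_)
        rw [Real.closedBall_eq_Icc]
        intro y hy
        constructor <;> [linarith [hy.1]; exact hy.2]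
      have step3 : (∫ σ in closedBall τ h, ‖F σ - F τ‖)
          = 2 * h * ⨍ y in closedBall τ h, ‖F y - F τ‖ := by
        rw [setAverage_eq, measureReal_def, Real.volume_closedBall, ENNReal.toReal_ofReal (by positivity),
          smul_eq_mul]
        field_simp
      calc ‖h⁻¹ • ∫ σ in τ..(τ + h), (F σ - F τ)‖
          = h⁻¹ * ‖∫ σ in τ..(τ + h), (F σ - F τ)‖ := by
            rw [norm_smul, Real.norm_eq_abs, abs_of_pos (by positivity)]
        _ ≤ h⁻¹ * (2 * h * ⨍ y in closedBall τ h, ‖F y - F τ‖) := by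
            rw [← step3]; gcongr; exact step1.trans step2
        _ = 2 * ⨍ y in closedBall τ h, ‖F y - F τ‖ := by field_simp
    · have := havg.const_mul 2
      simpa using this
  have hxalim : ∀ t ≥ (0:ℝ), Tendsto (fun h => xa h t) l (nhds (x t)) := by
    intro t ht
    rw [tendsto_iff_norm_sub_tendsto_zero]
    refine squeeze_zero' (g := fun h => 2 * C * h)
      (Eventually.of_forall fun h => norm_nonneg _) ?_ ?_
    · filter_upwards [self_mem_nhdsWithin] with h hh
      exact hxaclose h hh t ht
    · have h1 : Tendsto (fun h : ℝ => 2 * C * h) (nhds 0) (nhds (2 * C * 0)) :=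
        (continuous_const.mul continuous_id).tendsto 0
      simpa using h1.mono_left nhdsWithin_le_nhds
  have hev : ∀ᶠ h in l, h ∈ Set.Ioc (0:ℝ) h₀ := Ioc_mem_nhdsGT_of_mem ⟨le_rfl, h₀pos⟩
  have hAlim : Tendsto (fun h => ∫ t in Set.Ioc (0:ℝ) T, Real.exp (-lam * t) *
      ((fderiv ℝ φ (xa h t)) (D h t) - lam * φ (xa h t))) l
      (nhds (∫ t in Set.Ioc (0:ℝ) T,
        Real.exp (-lam * t) * ((fderiv ℝ φ (x t)) (F t) - lam * φ (x t)))) := by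
    refine tendsto_integral_filter_of_dominated_convergence
      (bound := fun _ => Real.exp (|lam| * T) * (M₁ * C + |lam| * M₀)) ?_ ?_ ?_ ?_
    · filter_upwards [hev] with h hh
      exact ((hcontD h hh.1 hh.2).mono Set.Ioc_subset_Icc_self).aestronglyMeasurable
        measurableSet_Ioc
    · filter_upwards [hev] with h hh
      rw [ae_restrict_iff' measurableSet_Ioc]
      refine Eventually.of_forall fun t htm => ?_
      have ht0 : (0:ℝ) ≤ t := htm.1.le
      have hmem := hxamem h hh.1 hh.2 t ht0
      have e1 : Real.exp (-lam * t) ≤ Real.exp (|lam| * T) := by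
        apply Real.exp_le_exp.2
        calc -lam * t ≤ |lam| * t := mul_le_mul_of_nonneg_right (neg_le_abs lam) ht0
          _ ≤ |lam| * T := mul_le_mul_of_nonneg_left htm.2 (abs_nonneg lam)
      rw [Real.norm_eq_abs, abs_mul, Real.abs_exp]
      have e2 : |(fderiv ℝ φ (xa h t)) (D h t) - lam * φ (xa h t)| ≤ M₁ * C + |lam| * M₀ := by
        refine (abs_sub _ _).trans ?_
        gcongr
        · calc |(fderiv ℝ φ (xa h t)) (D h t)| ≤ ‖fderiv ℝ φ (xa h t)‖ * ‖D h t‖ :=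
              (fderiv ℝ φ (xa h t)).le_opNorm _
            _ ≤ M₁ * C := by
              apply mul_le_mul (hM₁ _ hmem) (hDbound h hh.1 t ht0) (norm_nonneg _)
                (le_trans (norm_nonneg _) (hM₁ _ hmem))
        · rw [abs_mul]
          exact mul_le_mul_of_nonneg_left (hM₀ _ hmem) (abs_nonneg lam)
      exact mul_le_mul e1 e2 (abs_nonneg _) (Real.exp_nonneg _)
    · exact integrableOn_const measure_Ioc_lt_top.ne
    · filter_upwards [ae_restrict_of_ae hDlim, ae_restrict_mem measurableSet_Ioc]
        with t hDl htm
      have ht0 : (0:ℝ) ≤ t := htm.1.le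
      have hxal := hxalim t ht0
      have hcA : ContinuousAt (fderiv ℝ φ) (x t) :=
        hDφcont.continuousAt (hs.mem_nhds (hXs (hxX t ht0)))
      have hDφlim : Tendsto (fun h => fderiv ℝ φ (xa h t)) l (nhds (fderiv ℝ φ (x t))) :=
        hcA.tendsto.comp hxal
      have happ : Tendsto (fun h => (fderiv ℝ φ (xa h t)) (D h t)) l
          (nhds ((fderiv ℝ φ (x t)) (F t))) :=
        ((isBoundedBilinearMap_apply (𝕜 := ℝ)).continuous.tendsto _).comp
          (hDφlim.prodMk_nhds (hDl ht0))
      have hφca : ContinuousAt φ (x t) :=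
        hφ.continuousOn.continuousAt (hs.mem_nhds (hXs (hxX t ht0)))
      have hφlim : Tendsto (fun h => φ (xa h t)) l (nhds (φ (x t))) := hφca.tendsto.comp hxal
      exact tendsto_const_nhds.mul (happ.sub (tendsto_const_nhds.mul hφlim))
  have hBlim : Tendsto (fun h => Real.exp (-lam * T) * φ (xa h T) - φ (x 0)) l
      (nhds (Real.exp (-lam * T) * φ (x T) - φ (x 0))) := by
    have hφca : ContinuousAt φ (x T) :=
      hφ.continuousOn.continuousAt (hs.mem_nhds (hXs (hxX T hT.le)))
    exact (tendsto_const_nhds.mul (hφca.tendsto.comp (hxalim T hT.le))).sub tendsto_const_nhds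
  have heq : (fun h => ∫ t in Set.Ioc (0:ℝ) T, Real.exp (-lam * t) *
      ((fderiv ℝ φ (xa h t)) (D h t) - lam * φ (xa h t))) =ᶠ[l]
      (fun h => Real.exp (-lam * T) * φ (xa h T) - φ (x 0)) := by
    filter_upwards [hev] with h hh
    exact hid h hh.1 hh.2
  exact tendsto_nhds_unique (hAlim.congr' heq) hBlim

open Metric Filter intervalIntegral in
/-- For the relaxed control system `ẋ = ∫_U f(x,u) dm_t(u)` with Young
measure `t ↦ ρ t`, the relaxed occupation measure satisfies `⟨N^m, Aφ⟩ = φ(x₀)` for all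
`φ ∈ C¹(X)`, i.e. `A* N^m = δ_{x₀}`. -/
theorem stmt_19 {n m : ℕ} (lam : ℝ) (hlam : 0 < lam)
    (X : Set (Fin n → ℝ)) (hX : IsCompact X)
    (U : Set (Fin m → ℝ)) (hU : IsCompact U)
    (f : (Fin n → ℝ) × (Fin m → ℝ) → (Fin n → ℝ))
    (hfc : Continuous f) (hfb : ∃ C, ∀ p, ‖f p‖ ≤ C)
    (hfLip : ∃ L, ∀ (y z : Fin n → ℝ) (v : Fin m → ℝ), v ∈ U →
      ‖f (y, v) - f (z, v)‖ ≤ L * ‖y - z‖)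
    (x₀ : Fin n → ℝ) (hx₀ : x₀ ∈ X)
    (ρ : ℝ → Measure (Fin m → ℝ))
    (hρprob : ∀ t, IsProbabilityMeasure (ρ t))
    (hρU : ∀ t, ρ t Uᶜ = 0)
    (hρmeas : ∀ h : (Fin m → ℝ) → ℝ, Continuous h →
      Measurable fun t => ∫ v, h v ∂(ρ t))
    (x : ℝ → Fin n → ℝ) (hxc : Continuous x) (hx0 : x 0 = x₀)
    (hsol : ∀ t ≥ (0:ℝ), x t = x₀ + ∫ τ in (0:ℝ)..t, (∫ v, f (x τ, v) ∂(ρ τ)))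
    (hxX : ∀ t ≥ (0:ℝ), x t ∈ X)
    (s : Set (Fin n → ℝ)) (hs : IsOpen s) (hXs : X ⊆ s)
    (φ : (Fin n → ℝ) → ℝ) (hφ : ContDiffOn ℝ 1 φ s) :
    ∫ t in Set.Ioi (0:ℝ),
        Real.exp (-lam * t) *
          (∫ v, (lam * φ (x t) - fderiv ℝ φ (x t) (f (x t, v))) ∂(ρ t)) = φ x₀ := by
  obtain ⟨C0, hC0⟩ := hfb
  set C : ℝ := max C0 0 with hCdef
  have hC : 0 ≤ C := le_max_right _ _
  have hfb' : ∀ p, ‖f p‖ ≤ C := fun p => (hC0 p).trans (le_max_left _ _)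
  set F : ℝ → Fin n → ℝ := fun τ => ∫ v, f (x τ, v) ∂(ρ τ) with hF
  have hint : ∀ (y : Fin n → ℝ) (τ : ℝ), Integrable (fun v => f (y, v)) (ρ τ) := by
    intro y τ
    haveI := hρprob τ
    exact (integrable_const C).mono'
      ((hfc.comp (Continuous.prodMk_right y)).aestronglyMeasurable)
      (ae_of_all _ fun v => hfb' _)
  have hFb : ∀ τ, ‖F τ‖ ≤ C := by
    intro τ
    haveI := hρprob τ
    calc ‖F τ‖ ≤ C * ((ρ τ) Set.univ).toReal :=
        norm_integral_le_of_norm_le_const (ae_of_all _ fun v => hfb' _)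
      _ = C := by simp
  have hucont : ∀ τ : ℝ, Continuous fun y : Fin n → ℝ => ∫ v, f (y, v) ∂(ρ τ) := by
    intro τ
    haveI := hρprob τ
    refine continuous_of_dominated (bound := fun _ => C)
      (fun y => (hfc.comp (Continuous.prodMk_right y)).aestronglyMeasurable)
      (fun y => ae_of_all _ fun v => hfb' _) (integrable_const C) ?_
    exact ae_of_all _ fun v => hfc.comp (continuous_id.prodMk continuous_const)
  have humeas : ∀ y : Fin n → ℝ, Measurable fun τ => ∫ v, f (y, v) ∂(ρ τ) := by
    intro y
    rw [measurable_pi_iff]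
    intro i
    have hcoord : ∀ τ : ℝ, (∫ v, f (y, v) ∂(ρ τ)) i = ∫ v, f (y, v) i ∂(ρ τ) := by
      intro τ
      haveI := hρprob τ
      exact (ContinuousLinearMap.integral_comp_comm
        (ContinuousLinearMap.proj (R := ℝ) (φ := fun _ : Fin n => ℝ) i) (hint y τ)).symm
    simp_rw [hcoord]
    exact hρmeas (fun v => f (y, v) i)
      ((continuous_apply i).comp (hfc.comp (Continuous.prodMk_right y)))
  have hFmeas : Measurable F := by
    have hm := measurable_uncurry_of_continuous_of_measurable
      (u := fun (y : Fin n → ℝ) (τ : ℝ) => ∫ v, f (y, v) ∂(ρ τ)) hucont humeas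
    exact hm.comp ((hxc.measurable).prodMk measurable_id)
  have hsol' : ∀ t ≥ (0:ℝ), x t = x 0 + ∫ τ in (0:ℝ)..t, F τ := by
    intro t ht
    rw [hx0]
    exact hsol t ht
  have hkey := fun T hT =>
    key_lemma lam C hC F hFmeas hFb x hxc hsol' X hX hxX s hs hXs φ hφ T hT
  -- bounds on X
  obtain ⟨M₀, hM₀⟩ := hX.exists_bound_of_continuousOn (hφ.continuousOn.mono hXs)
  have hDφcont : ContinuousOn (fderiv ℝ φ) s := hφ.continuousOn_fderiv_of_isOpen hs le_rfl
  obtain ⟨M₁, hM₁⟩ := hX.exists_bound_of_continuousOn (hDφcont.mono hXs)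
  set G : ℝ → ℝ := fun t =>
    Real.exp (-lam * t) * ((fderiv ℝ φ (x t)) (F t) - lam * φ (x t)) with hG
  have hmapsIoi : Set.MapsTo x (Set.Ioi (0:ℝ)) s := fun t ht => hXs (hxX t (le_of_lt ht))
  have hGmeas : AEStronglyMeasurable G (volume.restrict (Set.Ioi 0)) := by
    have hA : ContinuousOn (fun t => fderiv ℝ φ (x t)) (Set.Ioi (0:ℝ)) :=
      hDφcont.comp hxc.continuousOn hmapsIoi
    have h1 : AEStronglyMeasurable (fun t => fderiv ℝ φ (x t))
        (volume.restrict (Set.Ioi (0:ℝ))) := hA.aestronglyMeasurable measurableSet_Ioi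
    have h2 : AEStronglyMeasurable F (volume.restrict (Set.Ioi 0)) :=
      hFmeas.aestronglyMeasurable.restrict
    have happ : AEStronglyMeasurable (fun t => (fderiv ℝ φ (x t)) (F t))
        (volume.restrict (Set.Ioi 0)) :=
      (isBoundedBilinearMap_apply (𝕜 := ℝ)).continuous.comp_aestronglyMeasurable
        (h1.prodMk h2)
    have hφx : AEStronglyMeasurable (fun t => φ (x t)) (volume.restrict (Set.Ioi 0)) :=
      ((hφ.continuousOn.comp hxc.continuousOn hmapsIoi).aestronglyMeasurable measurableSet_Ioi)
    exact ((Real.continuous_exp.comp (continuous_const.mul continuous_id)).aestronglyMeasurable.restrict).mul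
      (happ.sub (aestronglyMeasurable_const.mul hφx))
  have hGbound : ∀ t ∈ Set.Ioi (0:ℝ),
      ‖G t‖ ≤ (M₁ * C + |lam| * M₀) * Real.exp (-lam * t) := by
    intro t ht
    have hmem := hxX t (le_of_lt ht)
    rw [hG]
    simp only
    rw [Real.norm_eq_abs, abs_mul, Real.abs_exp, mul_comm]
    have e2 : |(fderiv ℝ φ (x t)) (F t) - lam * φ (x t)| ≤ M₁ * C + |lam| * M₀ := by
      refine (abs_sub _ _).trans ?_
      gcongr
      · calc |(fderiv ℝ φ (x t)) (F t)| ≤ ‖fderiv ℝ φ (x t)‖ * ‖F t‖ :=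
            (fderiv ℝ φ (x t)).le_opNorm _
          _ ≤ M₁ * C := mul_le_mul (hM₁ _ hmem) (hFb t) (norm_nonneg _)
              (le_trans (norm_nonneg _) (hM₁ _ hmem))
      · rw [abs_mul]
        exact mul_le_mul_of_nonneg_left (hM₀ _ hmem) (abs_nonneg lam)
    exact mul_le_mul_of_nonneg_right e2 (Real.exp_nonneg _)
  have hGint : IntegrableOn G (Set.Ioi (0:ℝ)) := by
    refine Integrable.mono'
      ((exp_neg_integrableOn_Ioi 0 hlam).const_mul (M₁ * C + |lam| * M₀)) hGmeas ?_
    rw [ae_restrict_iff' measurableSet_Ioi]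
    exact Eventually.of_forall hGbound
  have hlim1 : Tendsto (fun T => ∫ t in (0:ℝ)..T, G t) atTop
      (nhds (∫ t in Set.Ioi (0:ℝ), G t)) :=
    intervalIntegral_tendsto_integral_Ioi 0 hGint tendsto_id
  have hexp0 : Tendsto (fun T : ℝ => Real.exp (-lam * T)) atTop (nhds 0) := by
    have hmul : Tendsto (fun T : ℝ => -lam * T) atTop atBot := by
      exact Tendsto.const_mul_atTop_of_neg (neg_neg_iff_pos.2 hlam) tendsto_id
    have h2 := Real.tendsto_exp_atBot.comp hmul
    simpa [Function.comp_def] using h2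
  have hlim2 : Tendsto (fun T => Real.exp (-lam * T) * φ (x T) - φ (x 0)) atTop
      (nhds (0 - φ (x 0))) := by
    refine Tendsto.sub ?_ tendsto_const_nhds
    refine squeeze_zero_norm' (a := fun T => M₀ * Real.exp (-lam * T)) ?_
      (by simpa using hexp0.const_mul M₀)
    filter_upwards [eventually_ge_atTop (0:ℝ)] with T hT
    rw [norm_mul, Real.norm_eq_abs, Real.abs_exp, Real.norm_eq_abs]
    calc Real.exp (-lam * T) * |φ (x T)| ≤ Real.exp (-lam * T) * M₀ := by
          gcongr
          exact hM₀ _ (hxX T hT)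
      _ = M₀ * Real.exp (-lam * T) := by ring
  have hEq : (fun T => ∫ t in (0:ℝ)..T, G t) =ᶠ[atTop]
      fun T => Real.exp (-lam * T) * φ (x T) - φ (x 0) := by
    filter_upwards [eventually_gt_atTop (0:ℝ)] with T hT
    rw [intervalIntegral.integral_of_le hT.le]
    exact hkey T hT
  have hIoiG : ∫ t in Set.Ioi (0:ℝ), G t = 0 - φ (x 0) :=
    tendsto_nhds_unique (hlim1.congr' hEq) hlim2
  have hpt : ∀ t ∈ Set.Ioi (0:ℝ),
      Real.exp (-lam * t) *
        (∫ v, (lam * φ (x t) - fderiv ℝ φ (x t) (f (x t, v))) ∂(ρ t)) = -G t := by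
    intro t ht
    haveI := hρprob t
    have h1 : (∫ v, (lam * φ (x t) - fderiv ℝ φ (x t) (f (x t, v))) ∂(ρ t))
        = lam * φ (x t) - (fderiv ℝ φ (x t)) (F t) := by
      rw [integral_sub (integrable_const _)
        ((fderiv ℝ φ (x t)).integrable_comp (hint (x t) t)),
        MeasureTheory.integral_const, ContinuousLinearMap.integral_comp_comm _ (hint (x t) t)]
      simp [hF]
    rw [h1, hG]
    ring
  calc ∫ t in Set.Ioi (0:ℝ), Real.exp (-lam * t) *
          (∫ v, (lam * φ (x t) - fderiv ℝ φ (x t) (f (x t, v))) ∂(ρ t))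
      = ∫ t in Set.Ioi (0:ℝ), -G t :=
        setIntegral_congr_fun measurableSet_Ioi (fun t ht => hpt t ht)
    _ = -(∫ t in Set.Ioi (0:ℝ), G t) := integral_neg _
    _ = φ x₀ := by rw [hIoiG, hx0]; ring
end
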